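/- Let ω = (ω_n, …, ω_1, ω_0) be a general basis of the polynomials of degree ≤ n over a field F, let 0 < k < n, let M be an (n−k)×n matrix over F, and let β = (β_1, …, β_n) ∈ F̄^n be arbitrary. Then, as an identity in F̄[x]: det([M; X_{ω,k}]) · det W(β) = (−1)^k · det N, where [M; X_{ω,k}] is the n×n matrix over F[x] obtained by stacking M on top of X_{ω,k}, W(β) is the n×n matrix with (i,j) entry ω_{n−i}(β_j), and N is the (n+1)×(n+1) matrix over F̄[x] whose top-left (n−k)×n block is the matrix product M·W(β), whose top-right (n−k)×1 block is zero, and whose entry in row n−k+i (1 ≤ i ≤ k+1) is ω_{k+1−i}(β_j) in column j (1 ≤ j ≤ n) and ω_{k+1−i}(x) in the last column. -/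

import Mathlib

open Polynomial Matrix BigOperators

noncomputable section

/-- A *general basis* of the polynomials of degree ≤ `n` over `K`:
`ω i` is monic of degree `i` for every `i ≤ n`. -/
def IsGeneralBasis {K : Type*} [Field K] (n : ℕ) (ω : ℕ → Polynomial K) : Prop :=
  ∀ i ≤ n, (ω i).Monic ∧ (ω i).natDegree = i

/-- The `k × n` matrix `X_{ω,k}`: rows `1,…,k` carry `−I_k` in (1-based) columns
`n−k, …, n−1`, and the last column of row `i` is `ω_{k+1−i}`. -/
def Xmat {K : Type*} [Field K] (n k : ℕ) (ω : ℕ → Polynomial K) :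
    Matrix (Fin k) (Fin n) (Polynomial K) :=
  Matrix.of fun i j =>
    if (j : ℕ) = n - k - 1 + (i : ℕ) then -1
    else if (j : ℕ) = n - 1 then ω (k - (i : ℕ))
    else 0

/-- Stacking an `(n−k) × n` scalar matrix on top of a `k × n` polynomial matrix. -/
def stackMat {K : Type*} [Field K] {n k : ℕ}
    (M : Matrix (Fin (n - k)) (Fin n) K) (Y : Matrix (Fin k) (Fin n) (Polynomial K)) :
    Matrix (Fin n) (Fin n) (Polynomial K) :=
  Matrix.of fun i j =>
    if h : (i : ℕ) < n - k then Polynomial.C (M ⟨(i : ℕ), h⟩ j)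
    else Y ⟨(i : ℕ) - (n - k), by have := i.isLt; omega⟩ j

/-- The matrix `W(β)` with `(i,j)` entry `ω_{n−i}(β_j)` (1-based `i`). -/
def Wmat {K L : Type*} [Field K] [Field L] [Algebra K L] (n : ℕ)
    (ω : ℕ → Polynomial K) (α : Fin n → L) : Matrix (Fin n) (Fin n) L :=
  Matrix.of fun i j => Polynomial.aeval (α j) (ω (n - 1 - (i : ℕ)))

/-- The `(n+1) × (n+1)` matrix `N`: top-left block is `M · W(β)`, top-right block is
zero, and row `n−k+i` (1 ≤ i ≤ k+1) has entries `ω_{k+1−i}(β_j)` with last entry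
`ω_{k+1−i}(x)`. -/
def Nmat {K : Type*} [Field K] (n k : ℕ) (ω : ℕ → Polynomial K)
    (M : Matrix (Fin (n - k)) (Fin n) K) (β : Fin n → AlgebraicClosure K) :
    Matrix (Fin (n + 1)) (Fin (n + 1)) (Polynomial (AlgebraicClosure K)) :=
  Matrix.of fun i j =>
    if hi : (i : ℕ) < n - k then
      if hj : (j : ℕ) < n then
        Polynomial.C ((M.map (algebraMap K (AlgebraicClosure K)) * Wmat n ω β)
          ⟨(i : ℕ), hi⟩ ⟨(j : ℕ), hj⟩)
      else 0
    else
      if hj : (j : ℕ) < n then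
        Polynomial.C (Polynomial.aeval (β ⟨(j : ℕ), hj⟩) (ω (n - (i : ℕ))))
      else (ω (n - (i : ℕ))).map (algebraMap K (AlgebraicClosure K))


namespace Stmt4Aux

open Equiv

lemma det_toBlocks {α β R : Type*} [DecidableEq α] [DecidableEq β] [Fintype α] [Fintype β]
    [CommRing R] (Y : Matrix (α ⊕ β) (α ⊕ β) R) (h : Y.toBlocks₂₁ = 0) :
    Y.det = Y.toBlocks₁₁.det * Y.toBlocks₂₂.det := by
  conv_lhs => rw [← Matrix.fromBlocks_toBlocks Y, h]
  exact Matrix.det_fromBlocks_zero₂₁ _ _ _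

lemma det_rot (R : Type*) [CommRing R] (m : ℕ) :
    (Matrix.of fun t s : Fin (m+1) => if (t:ℕ) = ((s:ℕ)+1) % (m+1) then (1:R) else 0).det
      = (-1)^m := by
  have h1 : (Matrix.of fun t s : Fin (m+1) => if (t:ℕ) = ((s:ℕ)+1) % (m+1) then (1:R) else 0)
      = ((finRotate (m+1)).permMatrix R)ᵀ := by
    ext t s
    simp only [Matrix.of_apply, Matrix.transpose_apply, PEquiv.toMatrix_apply,
      Equiv.toPEquiv_apply, Option.mem_def, Option.some.injEq, finRotate_succ_apply]
    have hv : ((s + 1 : Fin (m+1)) : ℕ) = ((s:ℕ)+1) % (m+1) := by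
      rw [Fin.val_add, Fin.val_one', Nat.add_mod (s:ℕ) 1, Nat.mod_eq_of_lt s.isLt]
    by_cases h : s + 1 = t
    · rw [if_pos h, if_pos]; rw [← h, hv]
    · rw [if_neg h, if_neg]
      intro hc
      apply h
      apply Fin.ext
      rw [hv, ← hc]
  rw [h1, Matrix.det_transpose, Matrix.det_permutation, sign_finRotate]
  push_cast
  ring

variable {K : Type*} [Field K]

def Wp (n : ℕ) (ω : ℕ → Polynomial K) (β : Fin n → AlgebraicClosure K) :
    Matrix (Fin (n+1)) (Fin (n+1)) (Polynomial (AlgebraicClosure K)) :=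
  Matrix.of fun i j =>
    if (i : ℕ) < n then
      if hj : (j : ℕ) < n then
        Polynomial.C (Polynomial.aeval (β ⟨j, hj⟩) (ω (n - 1 - (i : ℕ))))
      else (ω (n - 1 - (i : ℕ))).map (algebraMap K (AlgebraicClosure K))
    else if (j : ℕ) < n then 0 else 1

def Bm (n k : ℕ) (ω : ℕ → Polynomial K) (M : Matrix (Fin (n-k)) (Fin n) K) :
    Matrix (Fin (n+1)) (Fin (n+1)) (Polynomial (AlgebraicClosure K)) :=
  Matrix.of fun i j =>
    if hi : (i : ℕ) < n - k then
      if hj : (j : ℕ) < n then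
        Polynomial.C (algebraMap K (AlgebraicClosure K) (M ⟨i, hi⟩ ⟨j, hj⟩))
      else -∑ l : Fin n, Polynomial.C (algebraMap K (AlgebraicClosure K) (M ⟨i, hi⟩ l)) *
        (ω (n - 1 - (l : ℕ))).map (algebraMap K (AlgebraicClosure K))
    else if (j : ℕ) = n - k - 1 + ((i : ℕ) - (n - k)) then 1 else 0

lemma det_Wp (n : ℕ) (ω : ℕ → Polynomial K) (β : Fin n → AlgebraicClosure K) :
    (Wp n ω β).det = Polynomial.C ((Wmat n ω β).det) := by
  rw [← Matrix.det_submatrix_equiv_self finSumFinEquiv (Wp n ω β)]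
  rw [det_toBlocks ((Wp n ω β).submatrix finSumFinEquiv finSumFinEquiv) ?h0]
  case h0 =>
    ext i j
    have hi : ((finSumFinEquiv (Sum.inr i : Fin n ⊕ Fin 1)) : ℕ) = n + (i : ℕ) := by
      simp [finSumFinEquiv_apply_right]
    have hj : ((finSumFinEquiv (Sum.inl j : Fin n ⊕ Fin 1)) : ℕ) = (j : ℕ) := by
      simp [finSumFinEquiv_apply_left]
    simp only [Matrix.toBlocks₂₁, Matrix.submatrix_apply, Matrix.of_apply, Wp, hi, hj,
      Matrix.zero_apply]
    rw [if_neg (by omega), if_pos j.isLt]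
  have h11 : ((Wp n ω β).submatrix finSumFinEquiv finSumFinEquiv).toBlocks₁₁
      = (Wmat n ω β).map Polynomial.C := by
    ext i j : 2
    have hi : ((finSumFinEquiv (Sum.inl i : Fin n ⊕ Fin 1)) : ℕ) = (i : ℕ) := by
      simp [finSumFinEquiv_apply_left]
    have hj : ((finSumFinEquiv (Sum.inl j : Fin n ⊕ Fin 1)) : ℕ) = (j : ℕ) := by
      simp [finSumFinEquiv_apply_left]
    simp only [Matrix.toBlocks₁₁, Matrix.submatrix_apply, Matrix.of_apply, Wp, hi, hj,
      Matrix.map_apply, Wmat]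
    rw [if_pos i.isLt, dif_pos j.isLt]
  have h22 : ((Wp n ω β).submatrix finSumFinEquiv finSumFinEquiv).toBlocks₂₂.det = 1 := by
    rw [Matrix.det_fin_one]
    have hi : ((finSumFinEquiv (Sum.inr (0 : Fin 1) : Fin n ⊕ Fin 1)) : ℕ) = n + 0 := by
      simp [finSumFinEquiv_apply_right]
    simp only [Matrix.toBlocks₂₂, Matrix.submatrix_apply, Matrix.of_apply, Wp, hi]
    rw [if_neg (by omega), if_neg (by omega)]
  rw [h11, h22, mul_one, RingHom.map_det, RingHom.mapMatrix_apply]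



lemma N_eq (n k : ℕ) (hk0 : 0 < k) (hkn : k < n) (ω : ℕ → Polynomial K)
    (M : Matrix (Fin (n-k)) (Fin n) K) (β : Fin n → AlgebraicClosure K) :
    Nmat n k ω M β = Bm n k ω M * Wp n ω β := by
  ext i j : 2
  rw [Matrix.mul_apply]
  by_cases hi : (i : ℕ) < n - k
  · rw [Fin.sum_univ_castSucc]
    by_cases hj : (j : ℕ) < n
    · have h1 : ∀ l : Fin n, Bm n k ω M i l.castSucc * Wp n ω β l.castSucc j
          = Polynomial.C ((M.map (algebraMap K (AlgebraicClosure K))) ⟨(i:ℕ), hi⟩ l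
              * (Wmat n ω β) l ⟨(j:ℕ), hj⟩) := by
        intro l
        have hl : ((l.castSucc : Fin (n+1)) : ℕ) = (l : ℕ) := rfl
        simp only [Bm, Wp, Matrix.of_apply, hl]
        rw [dif_pos hi, dif_pos l.isLt, if_pos l.isLt, dif_pos hj, _root_.map_mul]
        simp [Wmat, Matrix.map_apply]
      have h2 : Bm n k ω M i (Fin.last n) * Wp n ω β (Fin.last n) j = 0 := by
        have hl : ((Fin.last n : Fin (n+1)) : ℕ) = n := rfl
        simp only [Wp, Matrix.of_apply, hl]
        rw [if_neg (lt_irrefl n), if_pos hj, mul_zero]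
      rw [h2, add_zero, Finset.sum_congr rfl (fun l _ => h1 l), ← map_sum]
      simp only [Nmat, Matrix.of_apply]
      rw [dif_pos hi, dif_pos hj, Matrix.mul_apply]
    · have h1 : ∀ l : Fin n, Bm n k ω M i l.castSucc * Wp n ω β l.castSucc j
          = Polynomial.C (algebraMap K (AlgebraicClosure K) (M ⟨(i:ℕ), hi⟩ l))
              * (ω (n - 1 - (l:ℕ))).map (algebraMap K (AlgebraicClosure K)) := by
        intro l
        have hl : ((l.castSucc : Fin (n+1)) : ℕ) = (l : ℕ) := rfl
        simp only [Bm, Wp, Matrix.of_apply, hl]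
        rw [dif_pos hi, dif_pos l.isLt, if_pos l.isLt, dif_neg hj]
      have h2 : Bm n k ω M i (Fin.last n) * Wp n ω β (Fin.last n) j
          = -∑ l : Fin n, Polynomial.C (algebraMap K (AlgebraicClosure K) (M ⟨(i:ℕ), hi⟩ l))
              * (ω (n - 1 - (l:ℕ))).map (algebraMap K (AlgebraicClosure K)) := by
        have hl : ((Fin.last n : Fin (n+1)) : ℕ) = n := rfl
        simp only [Bm, Wp, Matrix.of_apply, hl]
        rw [dif_pos hi, dif_neg (lt_irrefl n), if_neg (lt_irrefl n), if_neg hj, mul_one]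
      rw [h2, Finset.sum_congr rfl (fun l _ => h1 l)]
      simp only [Nmat, Matrix.of_apply]
      rw [dif_pos hi, dif_neg hj, add_neg_cancel]
  · -- unit rows
    have hin : (i : ℕ) ≤ n := by omega
    have hp : n - k - 1 + ((i:ℕ) - (n - k)) < n := by omega
    set p : Fin (n+1) := ⟨n - k - 1 + ((i:ℕ) - (n - k)), by omega⟩ with hpdef
    have hBrow : ∀ l : Fin (n+1), Bm n k ω M i l
        = if l = p then 1 else 0 := by
      intro l
      simp only [Bm, Matrix.of_apply]
      rw [dif_neg hi]
      by_cases h : l = p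
      · rw [if_pos h, if_pos (by rw [h])]
      · rw [if_neg h, if_neg (fun hc => h (Fin.ext hc))]
    have key : ∑ l : Fin (n+1), Bm n k ω M i l * Wp n ω β l j = Wp n ω β p j := by
      rw [Finset.sum_eq_single p]
      · rw [hBrow p, if_pos rfl, one_mul]
      · intro b _ hb
        rw [hBrow b, if_neg hb, zero_mul]
      · intro h; exact absurd (Finset.mem_univ p) h
    rw [key]
    have harg : n - 1 - ((p : Fin (n+1)) : ℕ) = n - (i : ℕ) := by
      simp only [hpdef]
      omega
    simp only [Wp, Nmat, Matrix.of_apply]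
    rw [if_pos hp, dif_neg hi]
    by_cases hj : (j : ℕ) < n
    · rw [dif_pos hj, dif_pos hj, harg]
    · rw [dif_neg hj, dif_neg hj, harg]


/-- last column of the reduced matrix `T`. -/
def cE (n k : ℕ) (ω : ℕ → Polynomial K) (M : Matrix (Fin (n-k)) (Fin n) K) (i : Fin (n-k)) :
    Polynomial (AlgebraicClosure K) :=
  ∑ l : Fin n, if (l:ℕ) < n - k - 1 then 0
    else Polynomial.C (algebraMap K (AlgebraicClosure K) (M i l)) *
      (ω (n - 1 - (l : ℕ))).map (algebraMap K (AlgebraicClosure K))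

def Tm (n k : ℕ) (ω : ℕ → Polynomial K) (M : Matrix (Fin (n-k)) (Fin n) K) :
    Matrix (Fin (n-k)) (Fin (n-k)) (Polynomial (AlgebraicClosure K)) :=
  Matrix.of fun i j =>
    if h : (j : ℕ) < n - k - 1 then
      Polynomial.C (algebraMap K (AlgebraicClosure K) (M i ⟨j, by omega⟩))
    else cE n k ω M i

def E2 (n k : ℕ) (ω : ℕ → Polynomial K) :
    Matrix (Fin (n+1)) (Fin (n+1)) (Polynomial (AlgebraicClosure K)) :=
  Matrix.of fun l j =>
    if l = j then (if (j:ℕ) = n then -1 else 1)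
    else if (j:ℕ) = n ∧ (l:ℕ) < n - k - 1 then
      -(ω (n - 1 - (l:ℕ))).map (algebraMap K (AlgebraicClosure K)) else 0

def E1 (n k : ℕ) (ω : ℕ → Polynomial K) :
    Matrix (Fin n) (Fin n) (Polynomial (AlgebraicClosure K)) :=
  Matrix.of fun l j =>
    if l = j then 1
    else if (j:ℕ) = n - 1 ∧ n - k - 1 ≤ (l:ℕ) then
      (ω (n - 1 - (l:ℕ))).map (algebraMap K (AlgebraicClosure K)) else 0

def Am (n k : ℕ) (ω : ℕ → Polynomial K) (M : Matrix (Fin (n-k)) (Fin n) K) :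
    Matrix (Fin n) (Fin n) (Polynomial (AlgebraicClosure K)) :=
  (stackMat M (Xmat n k ω)).map (Polynomial.mapRingHom (algebraMap K (AlgebraicClosure K)))

lemma det_E2 (n k : ℕ) (ω : ℕ → Polynomial K) :
    (E2 (K := K) n k ω).det = -1 := by
  rw [Matrix.det_of_upperTriangular (M := E2 n k ω) ?ht]
  case ht =>
    intro i j hij
    have hij' : (j:ℕ) < (i:ℕ) := hij
    simp only [E2, Matrix.of_apply]
    rw [if_neg (by intro h; rw [h] at hij'; omega), if_neg (by
      rintro ⟨h1, _⟩
      have := i.isLt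
      omega)]
  have hd : ∀ l : Fin (n+1), E2 (K := K) n k ω l l
      = if l = Fin.last n then (-1 : Polynomial (AlgebraicClosure K)) else 1 := by
    intro l
    have he : E2 (K := K) n k ω l l
        = if (l:ℕ) = n then (-1 : Polynomial (AlgebraicClosure K)) else 1 := by
      simp [E2]
    rw [he]
    by_cases h : l = Fin.last n
    · subst h; simp
    · rw [if_neg (fun hc => h (Fin.ext (by simpa using hc))), if_neg h]
  rw [Finset.prod_congr rfl fun l _ => hd l, Finset.prod_ite_eq']
  simp

lemma det_E1 (n k : ℕ) (ω : ℕ → Polynomial K) :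
    (E1 (K := K) n k ω).det = 1 := by
  rw [Matrix.det_of_upperTriangular (M := E1 n k ω) ?ht]
  case ht =>
    intro i j hij
    have hij' : (j:ℕ) < (i:ℕ) := hij
    simp only [E1, Matrix.of_apply]
    rw [if_neg (by intro h; rw [h] at hij'; omega), if_neg (by
      rintro ⟨h1, h2⟩
      have := i.isLt
      omega)]
  have hd : ∀ l : Fin n, E1 (K := K) n k ω l l = 1 := by
    intro l
    simp [E1]
  rw [Finset.prod_congr rfl fun l _ => hd l, Finset.prod_const_one]

lemma Am_apply (n k : ℕ) (ω : ℕ → Polynomial K) (M : Matrix (Fin (n-k)) (Fin n) K)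
    (i l : Fin n) :
    Am n k ω M i l =
      if hi : (i:ℕ) < n - k then
        Polynomial.C (algebraMap K (AlgebraicClosure K) (M ⟨i, hi⟩ l))
      else if (l:ℕ) = n - k - 1 + ((i:ℕ) - (n-k)) then -1
      else if (l:ℕ) = n - 1 then
        (ω (k - ((i:ℕ) - (n-k)))).map (algebraMap K (AlgebraicClosure K))
      else 0 := by
  simp only [Am, Matrix.map_apply, stackMat, Xmat, Matrix.of_apply, Polynomial.coe_mapRingHom]
  split_ifs with h1 h2 h3
  · rw [Polynomial.map_C]
  · rw [Polynomial.map_neg, Polynomial.map_one]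
  · rfl
  · rw [Polynomial.map_zero]


variable (n k : ℕ) (ω : ℕ → Polynomial K) (M : Matrix (Fin (n-k)) (Fin n) K)

lemma BE2_ne (i j : Fin (n+1)) (hj : (j:ℕ) ≠ n) :
    (Bm n k ω M * E2 n k ω) i j = Bm n k ω M i j := by
  rw [Matrix.mul_apply, Finset.sum_eq_single j]
  · have h : E2 (K := K) n k ω j j = 1 := by
      simp only [E2, Matrix.of_apply]
      rw [if_pos trivial, if_neg hj]
    rw [h, mul_one]
  · intro b _ hb
    have h : E2 (K := K) n k ω b j = 0 := by
      simp only [E2, Matrix.of_apply]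
      rw [if_neg hb, if_neg (by rintro ⟨h1, _⟩; exact hj h1)]
    rw [h, mul_zero]
  · intro h; exact absurd (Finset.mem_univ j) h

lemma Bm_unit (i : Fin (n+1)) (hi : ¬ (i:ℕ) < n - k) (l : Fin (n+1)) :
    Bm n k ω M i l = if (l:ℕ) = n - k - 1 + ((i:ℕ) - (n-k)) then 1 else 0 := by
  simp only [Bm, Matrix.of_apply]
  rw [dif_neg hi]

lemma E2_last (l : Fin (n+1)) (hl : (l:ℕ) < n) :
    E2 (K := K) n k ω l (Fin.last n)
      = if (l:ℕ) < n - k - 1 then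
          -(ω (n - 1 - (l:ℕ))).map (algebraMap K (AlgebraicClosure K)) else 0 := by
  simp only [E2, Matrix.of_apply]
  rw [if_neg (by intro h; rw [h] at hl; simp [Fin.val_last] at hl)]
  by_cases h : (l:ℕ) < n - k - 1
  · rw [if_pos ⟨rfl, h⟩, if_pos h]
  · rw [if_neg (by rintro ⟨_, h2⟩; exact h h2), if_neg h]

lemma BE2_last_top (i : Fin (n+1)) (hi : (i:ℕ) < n - k) :
    (Bm n k ω M * E2 n k ω) i (Fin.last n) = cE n k ω M ⟨(i:ℕ), hi⟩ := by
  rw [Matrix.mul_apply, Fin.sum_univ_castSucc]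
  have h2 : Bm n k ω M i (Fin.last n) * E2 n k ω (Fin.last n) (Fin.last n)
      = ∑ l : Fin n, Polynomial.C (algebraMap K (AlgebraicClosure K) (M ⟨(i:ℕ), hi⟩ l)) *
          (ω (n - 1 - (l:ℕ))).map (algebraMap K (AlgebraicClosure K)) := by
    have hB : Bm n k ω M i (Fin.last n)
        = -∑ l : Fin n, Polynomial.C (algebraMap K (AlgebraicClosure K) (M ⟨(i:ℕ), hi⟩ l)) *
            (ω (n - 1 - (l:ℕ))).map (algebraMap K (AlgebraicClosure K)) := by
      simp only [Bm, Matrix.of_apply]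
      rw [dif_pos hi, dif_neg (by simp)]
    have hE : E2 (K := K) n k ω (Fin.last n) (Fin.last n) = -1 := by
      simp [E2]
    rw [hB, hE]
    ring
  rw [h2]
  have h1 : ∀ l : Fin n, Bm n k ω M i l.castSucc * E2 n k ω l.castSucc (Fin.last n)
      = if (l:ℕ) < n - k - 1 then
          -(Polynomial.C (algebraMap K (AlgebraicClosure K) (M ⟨(i:ℕ), hi⟩ l)) *
            (ω (n - 1 - (l:ℕ))).map (algebraMap K (AlgebraicClosure K))) else 0 := by
    intro l
    have hc : ((l.castSucc : Fin (n+1)) : ℕ) = (l:ℕ) := rfl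
    have hB : Bm n k ω M i l.castSucc
        = Polynomial.C (algebraMap K (AlgebraicClosure K) (M ⟨(i:ℕ), hi⟩ l)) := by
      simp only [Bm, Matrix.of_apply, hc]
      rw [dif_pos hi, dif_pos l.isLt]
    rw [hB, E2_last n k ω l.castSucc (by rw [hc]; exact l.isLt), hc]
    by_cases h : (l:ℕ) < n - k - 1
    · simp only [if_pos h]; ring
    · simp only [if_neg h, mul_zero]
  rw [Finset.sum_congr rfl fun l _ => h1 l, ← Finset.sum_add_distrib, cE]
  refine Finset.sum_congr rfl fun l _ => ?_
  by_cases h : (l:ℕ) < n - k - 1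
  · rw [if_pos h, if_pos h]; ring
  · rw [if_neg h, if_neg h, zero_add]

lemma BE2_last_bot (i : Fin (n+1)) (hi : ¬ (i:ℕ) < n - k) (hkn : k < n) :
    (Bm n k ω M * E2 n k ω) i (Fin.last n) = 0 := by
  have hp : n - k - 1 + ((i:ℕ) - (n-k)) < n := by have := i.isLt; omega
  rw [Matrix.mul_apply, Finset.sum_eq_single (⟨n - k - 1 + ((i:ℕ) - (n-k)), by omega⟩ : Fin (n+1))]
  · rw [E2_last n k ω _ hp]
    rw [if_neg (by simp), mul_zero]
  · intro b _ hb
    rw [Bm_unit n k ω M i hi b, if_neg (fun hc => hb (Fin.ext (by simpa using hc))), zero_mul]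
  · intro h; exact absurd (Finset.mem_univ _) h


lemma AE1_ne (i j : Fin n) (hj : (j:ℕ) ≠ n - 1) :
    (Am n k ω M * E1 n k ω) i j = Am n k ω M i j := by
  rw [Matrix.mul_apply, Finset.sum_eq_single j]
  · have h : E1 (K := K) n k ω j j = 1 := by
      simp only [E1, Matrix.of_apply]
      rw [if_pos trivial]
    rw [h, mul_one]
  · intro b _ hb
    have h : E1 (K := K) n k ω b j = 0 := by
      simp only [E1, Matrix.of_apply]
      rw [if_neg hb, if_neg (by rintro ⟨h1, _⟩; exact hj h1)]
    rw [h, mul_zero]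
  · intro h; exact absurd (Finset.mem_univ j) h

lemma AE1_col_top (hk0 : 0 < k) (hkn : k < n) (hω0 : ω 0 = 1) (i : Fin n)
    (hi : (i:ℕ) < n - k) :
    (Am n k ω M * E1 n k ω) i ⟨n-1, by omega⟩ = cE n k ω M ⟨(i:ℕ), hi⟩ := by
  rw [Matrix.mul_apply, cE]
  refine Finset.sum_congr rfl fun l _ => ?_
  have hAl : Am n k ω M i l
      = Polynomial.C (algebraMap K (AlgebraicClosure K) (M ⟨(i:ℕ), hi⟩ l)) := by
    rw [Am_apply, dif_pos hi]
  rw [hAl]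
  simp only [E1, Matrix.of_apply]
  by_cases hl : (l:ℕ) < n - k - 1
  · rw [if_pos hl, if_neg (by intro h; apply_fun Fin.val at h; simp at h; omega),
      if_neg (by rintro ⟨_, h2⟩; omega), mul_zero]
  · rw [if_neg hl]
    by_cases hl2 : (l:ℕ) = n - 1
    · rw [if_pos (Fin.ext (by simpa using hl2)), mul_one]
      have h0 : n - 1 - (l:ℕ) = 0 := by omega
      rw [h0, hω0, Polynomial.map_one, mul_one]
    · rw [if_neg (by intro h; apply_fun Fin.val at h; simp at h; omega),
        if_pos ⟨by trivial, by omega⟩]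

lemma AE1_col_bot (hk0 : 0 < k) (hkn : k < n) (i : Fin n) (hi : ¬ (i:ℕ) < n - k) :
    (Am n k ω M * E1 n k ω) i ⟨n-1, by omega⟩ = 0 := by
  have htk : (i:ℕ) - (n-k) < k := by have := i.isLt; omega
  set t := (i:ℕ) - (n-k) with ht
  have hvals : n - k - 1 + t < n - 1 := by omega
  set a : Fin n := ⟨n - k - 1 + t, by omega⟩ with ha
  set b : Fin n := ⟨n - 1, by omega⟩ with hb
  have hab : a ≠ b := by
    intro h; apply_fun Fin.val at h; simp [ha, hb] at h; omega
  rw [Matrix.mul_apply]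
  have hzero : ∀ l : Fin n, l ≠ a → l ≠ b →
      Am n k ω M i l * E1 n k ω l b = 0 := by
    intro l h1 h2
    have : Am n k ω M i l = 0 := by
      rw [Am_apply, dif_neg hi,
        if_neg (by intro h; exact h1 (Fin.ext (by simpa [ha] using h))),
        if_neg (by intro h; exact h2 (Fin.ext (by simpa [hb] using h)))]
    rw [this, zero_mul]
  have hsub : ∑ l : Fin n, Am n k ω M i l * E1 n k ω l b
      = ∑ l ∈ ({a, b} : Finset (Fin n)), Am n k ω M i l * E1 n k ω l b := by
    refine (Finset.sum_subset (Finset.subset_univ _) ?_).symm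
    intro x _ hx
    simp only [Finset.mem_insert, Finset.mem_singleton, not_or] at hx
    exact hzero x hx.1 hx.2
  rw [hsub, Finset.sum_pair hab]
  have hAa : Am n k ω M i a = -1 := by
    rw [Am_apply, dif_neg hi, if_pos rfl]
  have hAb : Am n k ω M i b
      = (ω (k - t)).map (algebraMap K (AlgebraicClosure K)) := by
    rw [Am_apply, dif_neg hi, if_neg (by simp [hb]; omega), if_pos rfl]
  have hEa : E1 (K := K) n k ω a b
      = (ω (n - 1 - ((a : Fin n):ℕ))).map (algebraMap K (AlgebraicClosure K)) := by
    simp only [E1, Matrix.of_apply]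
    rw [if_neg hab, if_pos ⟨by trivial, Nat.le_add_right _ _⟩]
  have hEb : E1 (K := K) n k ω b b = 1 := by
    simp only [E1, Matrix.of_apply]
    rw [if_pos trivial]
  rw [hAa, hAb, hEa, hEb]
  have harg : n - 1 - ((a : Fin n):ℕ) = k - t := by simp [ha]; omega
  rw [harg]
  ring


lemma det_Bm (hk0 : 0 < k) (hkn : k < n) :
    (Bm n k ω M).det = (-1 : Polynomial (AlgebraicClosure K))^k * (Tm n k ω M).det := by
  have hsum : (n - k) + (k + 1) = n + 1 := by omega
  set r : Fin (n-k) ⊕ Fin (k+1) ≃ Fin (n+1) := finSumFinEquiv.trans (finCongr hsum) with hr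
  have hrl : ∀ x : Fin (n-k), ((r (Sum.inl x)):ℕ) = (x:ℕ) := by
    intro x; simp [hr, finSumFinEquiv_apply_left]
  have hrr : ∀ u : Fin (k+1), ((r (Sum.inr u)):ℕ) = (n-k) + (u:ℕ) := by
    intro u; simp [hr, finSumFinEquiv_apply_right]
  set a : Fin (n+1) := ⟨n - k - 1, by omega⟩ with hadef
  have hav : (a:ℕ) = n - k - 1 := rfl
  have hab : a ≠ Fin.last n := by
    intro h; apply_fun Fin.val at h; rw [hav, Fin.val_last] at h; omega
  set s : Equiv.Perm (Fin (n+1)) := Equiv.swap a (Fin.last n) with hs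
  set Y := (((Bm n k ω M * E2 n k ω)).submatrix id ⇑s).submatrix ⇑r ⇑r with hY
  have hcol_l : ∀ j : Fin (n-k), (j:ℕ) < n - k - 1 → s (r (Sum.inl j)) = r (Sum.inl j) := by
    intro j hj
    apply Equiv.swap_apply_of_ne_of_ne
    · intro h; apply_fun Fin.val at h; rw [hrl j, hav] at h; omega
    · intro h; apply_fun Fin.val at h; rw [hrl j, Fin.val_last] at h
      have := j.isLt; omega
  have hcol_le : ∀ j : Fin (n-k), (j:ℕ) = n - k - 1 → s (r (Sum.inl j)) = Fin.last n := by
    intro j hj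
    have h : r (Sum.inl j) = a := Fin.ext (by rw [hrl j, hj, hav])
    rw [h, hs]; exact Equiv.swap_apply_left a _
  have hcol_ru : ∀ u : Fin (k+1), (u:ℕ) < k → s (r (Sum.inr u)) = r (Sum.inr u) := by
    intro u hu
    apply Equiv.swap_apply_of_ne_of_ne
    · intro h; apply_fun Fin.val at h; rw [hrr u, hav] at h; omega
    · intro h; apply_fun Fin.val at h; rw [hrr u, Fin.val_last] at h; omega
  have hcol_rk : ∀ u : Fin (k+1), (u:ℕ) = k → s (r (Sum.inr u)) = a := by
    intro u hu
    have h : r (Sum.inr u) = Fin.last n := Fin.ext (by rw [hrr u, hu, Fin.val_last]; omega)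
    rw [h, hs]; exact Equiv.swap_apply_right a _
  have hrow_bot : ∀ t : Fin (k+1), ¬ ((r (Sum.inr t)):ℕ) < n - k := by
    intro t; rw [hrr t]; omega
  have h21 : Y.toBlocks₂₁ = 0 := by
    refine Matrix.ext fun t j => ?_
    simp only [Matrix.toBlocks₂₁, Matrix.of_apply, Matrix.submatrix_apply, id_eq,
      Matrix.zero_apply, hY]
    by_cases hj : (j:ℕ) < n - k - 1
    · rw [hcol_l j hj, BE2_ne n k ω M _ _ (by rw [hrl j]; have := j.isLt; omega),
        Bm_unit n k ω M _ (hrow_bot t), if_neg (by rw [hrl j, hrr t]; omega)]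
    · have hj' : (j:ℕ) = n - k - 1 := by have := j.isLt; omega
      rw [hcol_le j hj', BE2_last_bot n k ω M _ (hrow_bot t) hkn]
  have h11 : Y.toBlocks₁₁ = Tm n k ω M := by
    refine Matrix.ext fun i j => ?_
    simp only [Matrix.toBlocks₁₁, Matrix.of_apply, Matrix.submatrix_apply, id_eq, hY]
    have hrow : ((r (Sum.inl i)):ℕ) < n - k := by rw [hrl i]; exact i.isLt
    by_cases hj : (j:ℕ) < n - k - 1
    · rw [hcol_l j hj, BE2_ne n k ω M _ _ (by rw [hrl j]; have := j.isLt; omega)]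
      simp only [Bm, Matrix.of_apply]
      rw [dif_pos hrow, dif_pos (by rw [hrl j]; have := j.isLt; omega)]
      simp only [Tm, Matrix.of_apply]
      rw [dif_pos hj]
      congr 2 <;> first | rfl | exact Fin.ext (hrl _) | exact Fin.ext (by rw [hrl]) 
    · have hj' : (j:ℕ) = n - k - 1 := by have := j.isLt; omega
      rw [hcol_le j hj', BE2_last_top n k ω M _ hrow]
      simp only [Tm, Matrix.of_apply]
      rw [dif_neg hj]
      congr 1 <;> first | rfl | exact Fin.ext (hrl _)
  have h22 : Y.toBlocks₂₂ = Matrix.of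
      (fun t u : Fin (k+1) => if (t:ℕ) = ((u:ℕ)+1) % (k+1) then
        (1 : Polynomial (AlgebraicClosure K)) else 0) := by
    refine Matrix.ext fun t u => ?_
    simp only [Matrix.toBlocks₂₂, Matrix.of_apply, Matrix.submatrix_apply, id_eq, hY]
    by_cases hu : (u:ℕ) < k
    · rw [hcol_ru u hu, BE2_ne n k ω M _ _ (by rw [hrr u]; omega),
        Bm_unit n k ω M _ (hrow_bot t), hrr u, hrr t]
      have hmod : ((u:ℕ)+1) % (k+1) = (u:ℕ)+1 := Nat.mod_eq_of_lt (by omega)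
      rw [hmod]
      by_cases h : (t:ℕ) = (u:ℕ)+1
      · rw [if_pos (by omega), if_pos h]
      · rw [if_neg (by omega), if_neg h]
    · have hu' : (u:ℕ) = k := by have := u.isLt; omega
      rw [hcol_rk u hu', BE2_ne n k ω M _ _ (by rw [hav]; omega),
        Bm_unit n k ω M _ (hrow_bot t), hav, hrr t]
      have hmod : ((u:ℕ)+1) % (k+1) = 0 := by rw [hu']; simp
      rw [hmod]
      by_cases h : (t:ℕ) = 0
      · rw [if_pos (by omega), if_pos h]
      · rw [if_neg (by omega), if_neg h]
  have hdet : Y.det = (Tm n k ω M).det * (-1)^k := by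
    rw [det_toBlocks Y h21, h11, h22, det_rot]
  have h2 : Y.det = (((Bm n k ω M * E2 n k ω)).submatrix id ⇑s).det :=
    Matrix.det_submatrix_equiv_self r _
  have h3 : (((Bm n k ω M * E2 n k ω)).submatrix id ⇑s).det
      = -((Bm n k ω M * E2 n k ω)).det := by
    rw [Matrix.det_permute', hs, Equiv.Perm.sign_swap hab]
    simp
  have h4 : ((Bm n k ω M * E2 n k ω)).det = -(Bm n k ω M).det := by
    rw [Matrix.det_mul, det_E2]; ring
  have hfin : (Tm n k ω M).det * (-1)^k = (Bm n k ω M).det := by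
    rw [← hdet, h2, h3, h4]; ring
  rw [← hfin]; ring


lemma det_Am (hk0 : 0 < k) (hkn : k < n) (hω0 : ω 0 = 1) :
    (Am n k ω M).det = (Tm n k ω M).det := by
  have hsum : (n - k) + k = n := by omega
  set r : Fin (n-k) ⊕ Fin k ≃ Fin n := finSumFinEquiv.trans (finCongr hsum) with hr
  have hrl : ∀ x : Fin (n-k), ((r (Sum.inl x)):ℕ) = (x:ℕ) := by
    intro x; simp [hr, finSumFinEquiv_apply_left]
  have hrr : ∀ u : Fin k, ((r (Sum.inr u)):ℕ) = (n-k) + (u:ℕ) := by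
    intro u; simp [hr, finSumFinEquiv_apply_right]
  set a : Fin n := ⟨n - k - 1, by omega⟩ with hadef
  set b : Fin n := ⟨n - 1, by omega⟩ with hbdef
  have hav : (a:ℕ) = n - k - 1 := rfl
  have hbv : (b:ℕ) = n - 1 := rfl
  have hab : a ≠ b := by
    intro h; apply_fun Fin.val at h; rw [hav, hbv] at h; omega
  set s : Equiv.Perm (Fin n) := Equiv.swap a b with hs
  set Y := (((Am n k ω M * E1 n k ω)).submatrix id ⇑s).submatrix ⇑r ⇑r with hY
  have hcol_l : ∀ j : Fin (n-k), (j:ℕ) < n - k - 1 → s (r (Sum.inl j)) = r (Sum.inl j) := by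
    intro j hj
    apply Equiv.swap_apply_of_ne_of_ne
    · intro h; apply_fun Fin.val at h; rw [hrl j, hav] at h; omega
    · intro h; apply_fun Fin.val at h; rw [hrl j, hbv] at h; have := j.isLt; omega
  have hcol_le : ∀ j : Fin (n-k), (j:ℕ) = n - k - 1 → s (r (Sum.inl j)) = b := by
    intro j hj
    have h : r (Sum.inl j) = a := Fin.ext (by rw [hrl j, hj, hav])
    rw [h, hs]; exact Equiv.swap_apply_left a b
  have hcol_ru : ∀ u : Fin k, (u:ℕ) < k - 1 → s (r (Sum.inr u)) = r (Sum.inr u) := by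
    intro u hu
    apply Equiv.swap_apply_of_ne_of_ne
    · intro h; apply_fun Fin.val at h; rw [hrr u, hav] at h; omega
    · intro h; apply_fun Fin.val at h; rw [hrr u, hbv] at h; omega
  have hcol_rk : ∀ u : Fin k, (u:ℕ) = k - 1 → s (r (Sum.inr u)) = a := by
    intro u hu
    have h : r (Sum.inr u) = b := Fin.ext (by rw [hrr u, hu, hbv]; omega)
    rw [h, hs]; exact Equiv.swap_apply_right a b
  have hrow_bot : ∀ t : Fin k, ¬ ((r (Sum.inr t)):ℕ) < n - k := by
    intro t; rw [hrr t]; omega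
  have hbmk : b = (⟨n - 1, by omega⟩ : Fin n) := rfl
  have h21 : Y.toBlocks₂₁ = 0 := by
    refine Matrix.ext fun t j => ?_
    simp only [Matrix.toBlocks₂₁, Matrix.of_apply, Matrix.submatrix_apply, id_eq,
      Matrix.zero_apply, hY]
    by_cases hj : (j:ℕ) < n - k - 1
    · rw [hcol_l j hj, AE1_ne n k ω M _ _ (by rw [hrl j]; have := j.isLt; omega),
        Am_apply, dif_neg (hrow_bot t),
        if_neg (by rw [hrl j, hrr t]; omega),
        if_neg (by rw [hrl j]; have := j.isLt; omega)]
    · have hj' : (j:ℕ) = n - k - 1 := by have := j.isLt; omega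
      rw [hcol_le j hj', hbmk, AE1_col_bot n k ω M hk0 hkn _ (hrow_bot t)]
  have h11 : Y.toBlocks₁₁ = Tm n k ω M := by
    refine Matrix.ext fun i j => ?_
    simp only [Matrix.toBlocks₁₁, Matrix.of_apply, Matrix.submatrix_apply, id_eq, hY]
    have hrow : ((r (Sum.inl i)):ℕ) < n - k := by rw [hrl i]; exact i.isLt
    by_cases hj : (j:ℕ) < n - k - 1
    · rw [hcol_l j hj, AE1_ne n k ω M _ _ (by rw [hrl j]; have := j.isLt; omega),
        Am_apply, dif_pos hrow]
      simp only [Tm, Matrix.of_apply]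
      rw [dif_pos hj]
      congr 2 <;> first | rfl | exact Fin.ext (hrl _)
    · have hj' : (j:ℕ) = n - k - 1 := by have := j.isLt; omega
      rw [hcol_le j hj', hbmk, AE1_col_top n k ω M hk0 hkn hω0 _ hrow]
      simp only [Tm, Matrix.of_apply]
      rw [dif_neg hj]
      congr 1 <;> first | rfl | exact Fin.ext (hrl _)
  have h22 : Y.toBlocks₂₂ = -(Matrix.of
      (fun t u : Fin k => if (t:ℕ) = ((u:ℕ)+1) % k then
        (1 : Polynomial (AlgebraicClosure K)) else 0)) := by
    refine Matrix.ext fun t u => ?_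
    simp only [Matrix.toBlocks₂₂, Matrix.of_apply, Matrix.submatrix_apply, id_eq, hY,
      Matrix.neg_apply]
    by_cases hu : (u:ℕ) < k - 1
    · rw [hcol_ru u hu, AE1_ne n k ω M _ _ (by rw [hrr u]; omega),
        Am_apply, dif_neg (hrow_bot t), hrr u, hrr t]
      have hmod : ((u:ℕ)+1) % k = (u:ℕ)+1 := Nat.mod_eq_of_lt (by omega)
      rw [hmod]
      by_cases h : (t:ℕ) = (u:ℕ)+1
      · rw [if_pos (show n-k+(u:ℕ) = n-k-1+((n-k+(t:ℕ)) - (n-k)) by omega), if_pos h]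
      · rw [if_neg (show ¬ n-k+(u:ℕ) = n-k-1+((n-k+(t:ℕ)) - (n-k)) by omega),
          if_neg (show ¬ n-k+(u:ℕ) = n-1 by omega), if_neg h, neg_zero]
    · have hu' : (u:ℕ) = k - 1 := by have := u.isLt; omega
      rw [hcol_rk u hu', AE1_ne n k ω M _ _ (by rw [hav]; omega),
        Am_apply, dif_neg (hrow_bot t), hav, hrr t]
      have hmod : ((u:ℕ)+1) % k = 0 := by
        have hk : (u:ℕ)+1 = k := by omega
        rw [hk, Nat.mod_self]
      rw [hmod]
      by_cases h : (t:ℕ) = 0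
      · rw [if_pos (show n-k-1 = n-k-1+((n-k+(t:ℕ)) - (n-k)) by omega), if_pos h]
      · rw [if_neg (show ¬ n-k-1 = n-k-1+((n-k+(t:ℕ)) - (n-k)) by omega),
          if_neg (show ¬ n-k-1 = n-1 by omega), if_neg h, neg_zero]
  have hd22 : (-(Matrix.of (fun t u : Fin k => if (t:ℕ) = ((u:ℕ)+1) % k then
      (1 : Polynomial (AlgebraicClosure K)) else 0))).det = -1 := by
    obtain ⟨k', rfl⟩ : ∃ k', k = k' + 1 := ⟨k-1, by omega⟩
    rw [Matrix.det_neg, det_rot, Fintype.card_fin, ← pow_add]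
    exact Odd.neg_one_pow ⟨k', by ring⟩
  have hdet : Y.det = (Tm n k ω M).det * (-1) := by
    rw [det_toBlocks Y h21, h11, h22, hd22]
  have h2 : Y.det = (((Am n k ω M * E1 n k ω)).submatrix id ⇑s).det :=
    Matrix.det_submatrix_equiv_self r _
  have h3 : (((Am n k ω M * E1 n k ω)).submatrix id ⇑s).det
      = -((Am n k ω M * E1 n k ω)).det := by
    rw [Matrix.det_permute', hs, Equiv.Perm.sign_swap hab]
    simp
  have h4 : ((Am n k ω M * E1 n k ω)).det = (Am n k ω M).det := by
    rw [Matrix.det_mul, det_E1, mul_one]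
  have hfin : (Tm n k ω M).det * (-1) = -(Am n k ω M).det := by
    rw [← hdet, h2, h3, h4]
  linear_combination hfin

end Stmt4Aux


/-- `det [M; X_{ω,k}] · det W(β) = (−1)^k · det N` in `F̄[x]`, for an
arbitrary `(n−k) × n` matrix `M` over `F` and arbitrary `β ∈ F̄ⁿ`. -/
theorem stack_det_mul_W_det
    {K : Type*} [Field K] (n k : ℕ) (hk0 : 0 < k) (hkn : k < n)
    (ω : ℕ → Polynomial K) (hω : IsGeneralBasis n ω)
    (M : Matrix (Fin (n - k)) (Fin n) K) (β : Fin n → AlgebraicClosure K) :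
    ((stackMat M (Xmat n k ω)).det).map (algebraMap K (AlgebraicClosure K)) *
        Polynomial.C (Wmat n ω β).det =
      (-1 : Polynomial (AlgebraicClosure K)) ^ k * (Nmat n k ω M β).det := by
  have hω0 : ω 0 = 1 :=
    ((hω 0 (by omega)).1.natDegree_eq_zero).mp (hω 0 (by omega)).2
  have hAm : ((stackMat M (Xmat n k ω)).det).map (algebraMap K (AlgebraicClosure K))
      = (Stmt4Aux.Am n k ω M).det := by
    have h := RingHom.map_det (Polynomial.mapRingHom (algebraMap K (AlgebraicClosure K)))
      (stackMat M (Xmat n k ω))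
    simpa [Stmt4Aux.Am, RingHom.mapMatrix_apply, Polynomial.coe_mapRingHom] using h
  have hBA : (Stmt4Aux.Bm n k ω M).det
      = (-1 : Polynomial (AlgebraicClosure K))^k * (Stmt4Aux.Am n k ω M).det := by
    rw [Stmt4Aux.det_Bm n k ω M hk0 hkn, Stmt4Aux.det_Am n k ω M hk0 hkn hω0]
  rw [Stmt4Aux.N_eq n k hk0 hkn ω M β, Matrix.det_mul, Stmt4Aux.det_Wp, hAm, hBA]
  rw [show (-1 : Polynomial (AlgebraicClosure K))^k *
      ((-1 : Polynomial (AlgebraicClosure K))^k * (Stmt4Aux.Am n k ω M).det *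
        Polynomial.C (Wmat n ω β).det)
    = ((-1 : Polynomial (AlgebraicClosure K))^k * (-1 : Polynomial (AlgebraicClosure K))^k) *
      ((Stmt4Aux.Am n k ω M).det * Polynomial.C (Wmat n ω β).det) from by ring]
  rw [← mul_pow]
  norm_num
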